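/- Let T_{n₁,…,n_t} be a 2H-tree. If t ≥ 2n_t + 2, then χ'_s(T_{n₁,…,n_t}) ≤ t. -/

import Mathlib

/-- A star edge coloring of `G` with `k` colors: a proper edge coloring such that
no path or cycle of length four (four edges) is bi-colored. The walk
`a-b-x-y-z` ranges over all paths of length four (`a,b,x,y,z` distinct) and all
cycles of length four (`z = a` and `a,b,x,y` distinct). -/
def IsStarEdgeColoring {V : Type*} (G : SimpleGraph V) {k : ℕ} (c : Sym2 V → Fin k) : Prop :=
  (∀ ⦃u v w : V⦄, G.Adj u v → G.Adj u w → v ≠ w → c s(u, v) ≠ c s(u, w)) ∧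
  (∀ a b x y z : V, G.Adj a b → G.Adj b x → G.Adj x y → G.Adj y z →
    a ≠ x → a ≠ y → b ≠ y → b ≠ z → x ≠ z →
    ¬(c s(a, b) = c s(x, y) ∧ c s(b, x) = c s(y, z)))

/-- The star chromatic index of `G`: the least `k` admitting a star edge coloring. -/
noncomputable def starChromaticIndex {V : Type*} (G : SimpleGraph V) : ℕ :=
  sInf {k : ℕ | ∃ c : Sym2 V → Fin k, IsStarEdgeColoring G c}
/-- The 2H-tree `T_{n₁,…,n_t}`: a root (`none`), its `t` neighbours `uᵢ = some ⟨i, none⟩`,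
and for each `i`, `n i` further leaves `some ⟨i, some j⟩` adjacent to `uᵢ`. -/
def twoHTree (t : ℕ) (n : Fin t → ℕ) :
    SimpleGraph (Option (Σ i : Fin t, Option (Fin (n i)))) :=
  SimpleGraph.fromRel (fun x y =>
    (x = none ∧ ∃ i : Fin t, y = some ⟨i, none⟩) ∨
    (∃ (i : Fin t) (j : Fin (n i)), x = some ⟨i, none⟩ ∧ y = some ⟨i, some j⟩))



lemma thModCancel {t a b c : ℕ} (h : (a + b) % t = (a + c) % t) : b % t = c % t :=
  Nat.ModEq.add_left_cancel (Nat.ModEq.refl a) h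

def thCol (t : ℕ) {n : Fin t → ℕ} : Option (Σ i : Fin t, Option (Fin (n i))) → ℕ
  | none => 0
  | some ⟨i, none⟩ => i
  | some ⟨i, some j⟩ => (i + j + 1) % t

def thDepth {t : ℕ} {n : Fin t → ℕ} : Option (Σ i : Fin t, Option (Fin (n i))) → ℕ
  | none => 0
  | some ⟨_, none⟩ => 1
  | some ⟨_, some _⟩ => 2

def thF (t : ℕ) (ht0 : 0 < t) {n : Fin t → ℕ}
    (x y : Option (Σ i : Fin t, Option (Fin (n i)))) : Fin t :=
  if thDepth x < thDepth y then ⟨thCol t y % t, Nat.mod_lt _ ht0⟩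
  else if thDepth y < thDepth x then ⟨thCol t x % t, Nat.mod_lt _ ht0⟩
  else ⟨0, ht0⟩

lemma thF_symm (t : ℕ) (ht0 : 0 < t) {n : Fin t → ℕ}
    (x y : Option (Σ i : Fin t, Option (Fin (n i)))) : thF t ht0 x y = thF t ht0 y x := by
  by_cases h1 : thDepth x < thDepth y <;> by_cases h2 : thDepth y < thDepth x <;>
    simp only [thF, h1, h2, if_true, if_false, if_pos, if_neg, not_false_iff] <;>
    first | rfl | omega

lemma thF_root_mid (t : ℕ) (ht0 : 0 < t) {n : Fin t → ℕ} (i : Fin t) :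
    (thF t ht0 (none : Option (Σ i : Fin t, Option (Fin (n i)))) (some ⟨i, none⟩)).val = i := by
  simp [thF, thDepth, thCol, Nat.mod_eq_of_lt i.isLt]

lemma thF_mid_root (t : ℕ) (ht0 : 0 < t) {n : Fin t → ℕ} (i : Fin t) :
    (thF t ht0 (some ⟨i, none⟩) (none : Option (Σ i : Fin t, Option (Fin (n i))))).val = i := by
  rw [thF_symm]; exact thF_root_mid t ht0 i

lemma thF_mid_leaf (t : ℕ) (ht0 : 0 < t) {n : Fin t → ℕ} (i i' : Fin t) (j : Fin (n i')) :
    (thF t ht0 (some ⟨i, none⟩) (some ⟨i', some j⟩)).val = (i' + j + 1) % t := by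
  simp [thF, thDepth, thCol, Nat.mod_mod_of_dvd _ dvd_rfl]

lemma thF_leaf_mid (t : ℕ) (ht0 : 0 < t) {n : Fin t → ℕ} (i i' : Fin t) (j : Fin (n i)) :
    (thF t ht0 (some ⟨i, some j⟩) (some ⟨i', none⟩)).val = (i + j + 1) % t := by
  rw [thF_symm]; exact thF_mid_leaf t ht0 i' i j

lemma thAdj_none {t : ℕ} {n : Fin t → ℕ} {y} (h : (twoHTree t n).Adj none y) :
    ∃ i, y = some ⟨i, none⟩ := by
  simp only [twoHTree, SimpleGraph.fromRel_adj] at h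
  tauto

lemma thAdj_mid {t : ℕ} {n : Fin t → ℕ} {i : Fin t} {y}
    (h : (twoHTree t n).Adj (some ⟨i, none⟩) y) :
    y = none ∨ ∃ j, y = some ⟨i, some j⟩ := by
  simp only [twoHTree, SimpleGraph.fromRel_adj] at h
  obtain ⟨-, h | h⟩ := h
  · rcases h with ⟨h, -⟩ | ⟨i', j, h1, h2⟩
    · simp at h
    · obtain ⟨rfl, -⟩ : i' = i ∧ HEq (none : Option (Fin (n i'))) (none : Option (Fin (n i))) := by
        simpa using h1.symm
      exact Or.inr ⟨j, h2⟩
  · rcases h with ⟨h, -⟩ | ⟨i', j, h1, h2⟩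
    · left; exact h
    · exfalso
      obtain ⟨rfl, h2⟩ : i' = i ∧ HEq (some j) (none : Option (Fin (n i))) := by simpa using h2.symm
      simp at h2

lemma thAdj_leaf {t : ℕ} {n : Fin t → ℕ} {i : Fin t} {j : Fin (n i)} {y}
    (h : (twoHTree t n).Adj (some ⟨i, some j⟩) y) :
    y = some ⟨i, none⟩ := by
  simp only [twoHTree, SimpleGraph.fromRel_adj] at h
  obtain ⟨-, h | h⟩ := h
  · rcases h with ⟨h, -⟩ | ⟨i', j', h1, h2⟩
    · simp at h
    · exfalso
      obtain ⟨rfl, h1⟩ : i' = i ∧ HEq (none : Option (Fin (n i'))) (some j) := by simpa using h1.symm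
      simp at h1
  · rcases h with ⟨h1, h2⟩ | ⟨i', j', h1, h2⟩
    · exfalso; rcases h2 with ⟨i', hi⟩
      obtain ⟨rfl, hi⟩ : i = i' ∧ HEq (some j) (none : Option (Fin (n i'))) := by simpa using hi
      simp at hi
    · obtain ⟨rfl, -⟩ : i' = i ∧ HEq (some j') (some j) := by simpa using h2.symm
      exact h1

/-- Theorem 6.3, second upper bound. For the 2H-tree `T_{n₁,…,n_t}`,
if `t ≥ 2·n_t + 2` then `χ'_s(T_{n₁,…,n_t}) ≤ t`. -/
theorem twoHTree_star_upper_bound_large_t (t : ℕ) (ht : 1 ≤ t) (n : Fin t → ℕ)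
    (hn : Monotone n) (h : 2 * n ⟨t - 1, by omega⟩ + 2 ≤ t) :
    starChromaticIndex (twoHTree t n) ≤ t := by
  have ht0 : 0 < t := ht
  set N := n ⟨t - 1, by omega⟩ with hN
  have hle : ∀ i : Fin t, n i ≤ N := fun i => hn (by
    show i ≤ (⟨t - 1, by omega⟩ : Fin t)
    rw [Fin.le_def]
    have := i.isLt
    simp only []
    omega)
  apply Nat.sInf_le
  refine ⟨Sym2.lift ⟨thF t ht0, thF_symm t ht0⟩, ?_, ?_⟩
  · -- proper coloring
    intro u v w huv huw hvw
    match u with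
    | none =>
      obtain ⟨i, rfl⟩ := thAdj_none huv
      obtain ⟨k, rfl⟩ := thAdj_none huw
      simp only [Sym2.lift_mk]
      intro heq
      apply hvw
      have := congrArg Fin.val heq
      rw [thF_root_mid, thF_root_mid] at this
      have : i = k := Fin.ext this
      rw [this]
    | some ⟨i, none⟩ =>
      rcases thAdj_mid huv with rfl | ⟨j, rfl⟩ <;> rcases thAdj_mid huw with rfl | ⟨j', rfl⟩
      · exact absurd rfl hvw
      · simp only [Sym2.lift_mk]
        intro heq
        have heqv := congrArg Fin.val heq
        rw [thF_mid_root, thF_mid_leaf] at heqv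
        have hj : (j' : ℕ) + 1 < t := by have := hle i; have := j'.isLt; omega
        have key : ((i : ℕ) + ((j' : ℕ) + 1)) % t = ((i : ℕ) + 0) % t := by
          have hz : ((i : ℕ) + 0) % t = (i : ℕ) := by
            rw [Nat.add_zero]; exact Nat.mod_eq_of_lt i.isLt
          rw [hz, ← Nat.add_assoc]; exact heqv.symm
        have := thModCancel key
        rw [Nat.zero_mod, Nat.mod_eq_of_lt hj] at this
        omega
      · simp only [Sym2.lift_mk]
        intro heq
        have heqv := congrArg Fin.val heq
        rw [thF_mid_root, thF_mid_leaf] at heqv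
        have hj : (j : ℕ) + 1 < t := by have := hle i; have := j.isLt; omega
        have key : ((i : ℕ) + ((j : ℕ) + 1)) % t = ((i : ℕ) + 0) % t := by
          have hz : ((i : ℕ) + 0) % t = (i : ℕ) := by
            rw [Nat.add_zero]; exact Nat.mod_eq_of_lt i.isLt
          rw [hz, ← Nat.add_assoc]; exact heqv
        have := thModCancel key
        rw [Nat.zero_mod, Nat.mod_eq_of_lt hj] at this
        omega
      · simp only [Sym2.lift_mk]
        intro heq
        apply hvw
        have heqv := congrArg Fin.val heq
        rw [thF_mid_leaf, thF_mid_leaf] at heqv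
        have hj : (j : ℕ) + 1 < t := by have := hle i; have := j.isLt; omega
        have hj' : (j' : ℕ) + 1 < t := by have := hle i; have := j'.isLt; omega
        have : ((i : ℕ) + ((j : ℕ) + 1)) % t = ((i : ℕ) + ((j' : ℕ) + 1)) % t := by
          rw [← Nat.add_assoc, ← Nat.add_assoc]; exact heqv
        have := thModCancel this
        rw [Nat.mod_eq_of_lt hj, Nat.mod_eq_of_lt hj'] at this
        have : j = j' := Fin.ext (by omega)
        rw [this]
    | some ⟨i, some j⟩ =>
      have h1 := thAdj_leaf huv
      have h2 := thAdj_leaf huw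
      exact absurd (h1.trans h2.symm) hvw
  · -- no bicolored P4
    intro a b x y z hab hbx hxy hyz ha1 ha2 hb1 hb2 hc1
    rintro ⟨e1, e2⟩
    match x with
    | some ⟨i, some j⟩ =>
      have hb := thAdj_leaf ((twoHTree t n).adj_symm hbx)
      have hy := thAdj_leaf hxy
      exact hb1 (hb.trans hy.symm)
    | some ⟨i, none⟩ =>
      rcases thAdj_mid ((twoHTree t n).adj_symm hbx) with rfl | ⟨j, rfl⟩
      · -- b = none
        rcases thAdj_mid hxy with rfl | ⟨j, rfl⟩
        · exact hb1 rfl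
        · have := thAdj_leaf hyz
          exact hc1 this.symm
      · -- b is a leaf of i
        have := thAdj_leaf ((twoHTree t n).adj_symm hab)
        exact ha1 this
    | none =>
      obtain ⟨i, rfl⟩ := thAdj_none ((twoHTree t n).adj_symm hbx)
      obtain ⟨k, rfl⟩ := thAdj_none hxy
      rcases thAdj_mid ((twoHTree t n).adj_symm hab) with rfl | ⟨j, rfl⟩
      · exact ha1 rfl
      rcases thAdj_mid hyz with rfl | ⟨j', rfl⟩
      · exact hc1 rfl
      simp only [Sym2.lift_mk] at e1 e2
      have e1v := congrArg Fin.val e1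
      have e2v := congrArg Fin.val e2
      rw [thF_leaf_mid, thF_root_mid] at e1v
      rw [thF_mid_root] at e2v
      rw [thF_mid_leaf] at e2v
      -- e1v : (i + j + 1) % t = k,  e2v : i = (k + j' + 1) % t
      have m1 : (i : ℕ) + j + 1 ≡ (k : ℕ) [MOD t] := by
        unfold Nat.ModEq
        rw [e1v, Nat.mod_eq_of_lt k.isLt]
      have m2 : (k : ℕ) + j' + 1 ≡ (i : ℕ) [MOD t] := by
        unfold Nat.ModEq
        rw [Nat.mod_eq_of_lt i.isLt]
        exact e2v.symm
      have m3 : (i : ℕ) + j + 1 + ((j' : ℕ) + 1) ≡ (k : ℕ) + ((j' : ℕ) + 1) [MOD t] :=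
        m1.add_right _
      have m4 : (i : ℕ) + j + 1 + ((j' : ℕ) + 1) ≡ (i : ℕ) [MOD t] := by
        refine m3.trans ?_
        have : (k : ℕ) + ((j' : ℕ) + 1) = (k : ℕ) + j' + 1 := by ring
        rw [this]; exact m2
      have m5 : ((i : ℕ) + ((j : ℕ) + (j' : ℕ) + 2)) % t = ((i : ℕ) + 0) % t := by
        have heq : (i : ℕ) + j + 1 + ((j' : ℕ) + 1) = (i : ℕ) + ((j : ℕ) + (j' : ℕ) + 2) := by ring
        rw [← heq]
        rw [Nat.add_zero]
        exact m4
      have m6 := thModCancel m5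
      rw [Nat.zero_mod] at m6
      have hdvd := Nat.dvd_of_mod_eq_zero m6
      have hpos : 0 < (j : ℕ) + (j' : ℕ) + 2 := by omega
      have hlt : (j : ℕ) + (j' : ℕ) + 2 < t := by
        have h1 := hle i; have h2 := hle k
        have := j.isLt; have := j'.isLt
        omega
      have := Nat.le_of_dvd hpos hdvd
      omega
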